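/- For any set X of n points in R^d, there exists a point p in R^d such that every closed half-space containing p contains at least ceil(n/(d+1)) points of X. -/

import Mathlib

/-- Rado's centerpoint theorem: for any n points in ℝ^d (a finite multiset, given as an
indexed family), there is a point p such that every closed half-space containing p
contains at least ⌈n/(d+1)⌉ of the points. -/
theorem centerpoint (d n : ℕ) (f : Fin n → (Fin d → ℝ)) :
    ∃ p : Fin d → ℝ, ∀ a : Fin d → ℝ, a ≠ 0 → ∀ b : ℝ,
      b ≤ ∑ k, a k * p k →
      ⌈(n : ℚ) / (d + 1)⌉₊ ≤ (Finset.univ.filter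
        (fun i : Fin n => b ≤ ∑ k, a k * f i k)).card := by
  classical
  set r := ⌈(n : ℚ) / (d + 1)⌉₊ with hr
  rcases Nat.eq_zero_or_pos n with hn | hn
  · refine ⟨0, fun a _ b _ => ?_⟩
    have : r = 0 := by simp [hr, hn]
    simp [this]
  -- key inequality: (d+1)*(r-1) < n
  have hr1 : 1 ≤ r := by
    rw [hr, Nat.one_le_ceil_iff]
    positivity
  have hkey : (d + 1) * (r - 1) < n := by
    have h1 : ((r : ℚ) - 1) < (n : ℚ) / (d + 1) := by
      have := Nat.ceil_lt_add_one (R := ℚ) (a := (n : ℚ) / (d + 1)) (by positivity)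
      rw [← hr] at this
      linarith
    have h2 : ((d : ℚ) + 1) * ((r : ℚ) - 1) < n := by
      have hd : (0 : ℚ) < (d : ℚ) + 1 := by positivity
      calc ((d : ℚ) + 1) * ((r : ℚ) - 1) < ((d : ℚ) + 1) * ((n : ℚ) / (d + 1)) := by
            exact mul_lt_mul_of_pos_left h1 hd
        _ = n := by field_simp
    have : ((d + 1) * (r - 1) : ℕ) = ((d : ℚ) + 1) * ((r : ℚ) - 1) := by
      push_cast [Nat.cast_sub hr1]
      ring
    exact_mod_cast this ▸ h2
  -- family of hulls
  set F : Finset (Fin n) → Set (Fin d → ℝ) := fun S => convexHull ℝ (f '' S) with hF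
  set s : Finset (Finset (Fin n)) :=
    Finset.univ.filter (fun S => n < S.card + r) with hs
  have hconv : ∀ S ∈ s, Convex ℝ (F S) := fun S _ => convex_convexHull ℝ _
  have hinter : ∀ I ⊆ s, I.card ≤ Module.finrank ℝ (Fin d → ℝ) + 1 →
      (⋂ S ∈ I, F S).Nonempty := by
    intro I hIs hIcard
    rw [Module.finrank_fin_fun] at hIcard
    -- find i ∈ all S ∈ I
    have : ∃ i : Fin n, ∀ S ∈ I, i ∈ S := by
      by_contra hcon
      push_neg at hcon
      set U : Finset (Fin n) := I.biUnion (fun S => Sᶜ) with hU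
      have hUuniv : U = Finset.univ := by
        ext i
        simp only [hU, Finset.mem_biUnion, Finset.mem_compl, Finset.mem_univ, iff_true]
        exact hcon i
      have hUcard : U.card ≤ I.card * (r - 1) := by
        calc U.card ≤ ∑ S ∈ I, Sᶜ.card := Finset.card_biUnion_le
          _ ≤ ∑ S ∈ I, (r - 1) := by
              apply Finset.sum_le_sum
              intro S hS
              have hSs := hIs hS
              rw [hs, Finset.mem_filter] at hSs
              have := hSs.2
              rw [Finset.card_compl, Fintype.card_fin]
              omega
          _ = I.card * (r - 1) := by rw [Finset.sum_const, smul_eq_mul]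
      have : n ≤ (d + 1) * (r - 1) := by
        have := hUuniv ▸ hUcard
        rw [Finset.card_univ, Fintype.card_fin] at this
        calc n ≤ I.card * (r - 1) := this
          _ ≤ (d + 1) * (r - 1) := Nat.mul_le_mul_right _ hIcard
      omega
    obtain ⟨i, hi⟩ := this
    refine ⟨f i, ?_⟩
    simp only [Set.mem_iInter]
    intro S hS
    exact subset_convexHull ℝ _ ⟨i, hi S hS, rfl⟩
  obtain ⟨p, hp⟩ := Convex.helly_theorem' hconv hinter
  refine ⟨p, fun a ha b hb => ?_⟩
  by_contra hcon
  push_neg at hcon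
  set S : Finset (Fin n) := Finset.univ.filter (fun i => ¬ b ≤ ∑ k, a k * f i k) with hS
  have hScard : n < S.card + r := by
    have := Finset.card_filter_add_card_filter_not
      (s := (Finset.univ : Finset (Fin n))) (p := fun i : Fin n => b ≤ ∑ k, a k * f i k)
    rw [Finset.card_univ, Fintype.card_fin] at this
    rw [hS]
    omega
  have hSmem : S ∈ s := by rw [hs]; simp [hScard]
  have hpS : p ∈ F S := by
    have := Set.mem_iInter.mp hp S
    exact Set.mem_iInter.mp (Set.mem_iInter.mp hp S) hSmem
  -- p in open half-space
  have hlin : IsLinearMap ℝ (fun x : Fin d → ℝ => ∑ k, a k * x k) := by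
    constructor
    · intro x y; simp [mul_add, Finset.sum_add_distrib]
    · intro c x
      simp only [Pi.smul_apply, smul_eq_mul, Finset.mul_sum]
      exact Finset.sum_congr rfl (fun k _ => by ring)
  have hhalf : Convex ℝ {x : Fin d → ℝ | (∑ k, a k * x k) < b} :=
    convex_halfSpace_lt hlin b
  have himg : f '' S ⊆ {x : Fin d → ℝ | (∑ k, a k * x k) < b} := by
    rintro _ ⟨i, hiS, rfl⟩
    rw [hS] at hiS
    simp only [Finset.coe_filter, Set.mem_setOf_eq, Finset.mem_univ, true_and] at hiS
    exact lt_of_not_ge hiS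
  have := convexHull_min himg hhalf hpS
  simp only [Set.mem_setOf_eq] at this
  linarith
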